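/- The conditional entropy of the x−y tilted distribution is nondecreasing in the tilting parameter: for all ρ_1, ρ_2 with −1 < ρ_1 ≤ ρ_2, one has H_{p̄^{ρ_1}}(x|y) ≤ H_{p̄^{ρ_2}}(x|y). -/

import Mathlib

open scoped BigOperators

noncomputable section

/-- `q` is a probability mass function on `Z`. -/
def IsPMF {Z : Type*} [Fintype Z] (q : Z → ℝ) : Prop :=
  (∀ z, 0 ≤ q z) ∧ ∑ z, q z = 1

/-- Shannon entropy in nats. -/
def entropy {Z : Type*} [Fintype Z] (q : Z → ℝ) : ℝ :=
  - ∑ z, q z * Real.log (q z)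

/-- Marginal on the second coordinate. -/
def margY {X Y : Type*} [Fintype X] (q : X × Y → ℝ) : Y → ℝ := fun y => ∑ x, q (x, y)

/-- Marginal on the first coordinate. -/
def margX {X Y : Type*} [Fintype Y] (q : X × Y → ℝ) : X → ℝ := fun x => ∑ y, q (x, y)

/-- Conditional entropy `H_q(x|y) = H(q) − H(q_Y)`. -/
def condEntXY {X Y : Type*} [Fintype X] [Fintype Y] (q : X × Y → ℝ) : ℝ :=
  entropy q - entropy (margY q)

/-- Conditional entropy `H_q(y|x) = H(q) − H(q_X)`. -/
def condEntYX {X Y : Type*} [Fintype X] [Fintype Y] (q : X × Y → ℝ) : ℝ :=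
  entropy q - entropy (margX q)

/-- `D(y,ρ) = Σ_x p(x,y)^{1/(1+ρ)}`. -/
def Dt {X Y : Type*} [Fintype X] (p : X × Y → ℝ) (ρ : ℝ) (y : Y) : ℝ :=
  ∑ x, p (x, y) ^ (1 / (1 + ρ))

/-- `B(ρ) = Σ_y D(y,ρ)^{1+ρ}`. -/
def Bt {X Y : Type*} [Fintype X] [Fintype Y] (p : X × Y → ℝ) (ρ : ℝ) : ℝ :=
  ∑ y, Dt p ρ y ^ (1 + ρ)

/-- The `x−y` tilted distribution
`p̄^ρ(x,y) = (D(y,ρ)^{1+ρ}/B(ρ)) · (p(x,y)^{1/(1+ρ)}/D(y,ρ))`. -/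
def xyTilted {X Y : Type*} [Fintype X] [Fintype Y] (p : X × Y → ℝ) (ρ : ℝ) :
    X × Y → ℝ :=
  fun z => (Dt p ρ z.2 ^ (1 + ρ) / Bt p ρ) * (p z ^ (1 / (1 + ρ)) / Dt p ρ z.2)

set_option linter.unusedVariables false
set_option linter.unusedSectionVars false

lemma my_holder2 {ι : Type*} [Fintype ι] (u v : ι → ℝ) (hu : ∀ i, 0 ≤ u i)
    (hv : ∀ i, 0 ≤ v i) {a b : ℝ} (ha : 0 < a) (hb : 0 < b) (hab : a + b = 1) :
    ∑ i, u i ^ a * v i ^ b ≤ (∑ i, u i) ^ a * (∑ i, v i) ^ b := by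
  have ha1 : a < 1 := by linarith
  have hconj : Real.HolderConjugate (1/a) (1/b) := by
    rw [Real.holderConjugate_iff]; constructor
    · rw [lt_div_iff₀ ha, one_mul]; exact ha1
    · simp only [one_div, inv_inv]; exact hab
  have h := Real.inner_le_Lp_mul_Lq Finset.univ (fun i => u i ^ a) (fun i => v i ^ b) hconj
  have e1 : ∀ i : ι, |u i ^ a| ^ (1/a) = u i := by
    intro i
    rw [abs_of_nonneg (Real.rpow_nonneg (hu i) a), ← Real.rpow_mul (hu i)]
    rw [mul_one_div, div_self (ne_of_gt ha), Real.rpow_one]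
  have e2 : ∀ i : ι, |v i ^ b| ^ (1/b) = v i := by
    intro i
    rw [abs_of_nonneg (Real.rpow_nonneg (hv i) b), ← Real.rpow_mul (hv i)]
    rw [mul_one_div, div_self (ne_of_gt hb), Real.rpow_one]
  simp only [e1, e2] at h
  rw [one_div_one_div, one_div_one_div] at h
  exact h


section Aux17
variable {X Y : Type*} [Fintype X] [Fintype Y] [Nonempty X] [Nonempty Y] (p : X × Y → ℝ)

lemma Dt_pos (hpos : ∀ z, 0 < p z) (ρ : ℝ) (y : Y) : 0 < Dt p ρ y :=
  Finset.sum_pos (fun x _ => Real.rpow_pos_of_pos (hpos _) _) Finset.univ_nonempty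

lemma Bt_pos (hpos : ∀ z, 0 < p z) (ρ : ℝ) : 0 < Bt p ρ :=
  Finset.sum_pos (fun y _ => Real.rpow_pos_of_pos (Dt_pos p hpos ρ y) _) Finset.univ_nonempty

lemma margY_tilted (hpos : ∀ z, 0 < p z) (ρ : ℝ) (y : Y) :
    margY (xyTilted p ρ) y = Dt p ρ y ^ (1 + ρ) / Bt p ρ := by
  unfold margY xyTilted
  simp only
  rw [← Finset.mul_sum, ← Finset.sum_div]
  rw [show (∑ x, p (x, y) ^ (1 / (1 + ρ))) = Dt p ρ y from rfl,
    div_self (Dt_pos p hpos ρ y).ne', mul_one]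

lemma condEnt_eq (hpos : ∀ z, 0 < p z) {ρ : ℝ} (hρ : -1 < ρ) :
    condEntXY (xyTilted p ρ) =
      (∑ y, (Real.log (Dt p ρ y) * Dt p ρ y ^ (1 + ρ)
        - 1 / (1 + ρ) * Dt p ρ y ^ ρ * ∑ x, p (x, y) ^ (1 / (1 + ρ)) * Real.log (p (x, y))))
        / Bt p ρ := by
  have hs : (0:ℝ) < 1 + ρ := by linarith
  have hB := Bt_pos p hpos ρ
  have hinner : ∀ y : Y, (∑ x, xyTilted p ρ (x, y) * Real.log (xyTilted p ρ (x, y)))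
      = margY (xyTilted p ρ) y * Real.log (margY (xyTilted p ρ) y)
        - (Real.log (Dt p ρ y) * Dt p ρ y ^ (1 + ρ)
          - 1 / (1 + ρ) * Dt p ρ y ^ ρ * ∑ x, p (x, y) ^ (1 / (1 + ρ)) * Real.log (p (x, y)))
          / Bt p ρ := by
    intro y
    have hD := Dt_pos p hpos ρ y
    set D := Dt p ρ y with hDdef
    set B := Bt p ρ with hBdef
    set w : ℝ := D ^ (1 + ρ) / B with hwdef
    have hw : 0 < w := by positivity
    have hq : ∀ x : X, xyTilted p ρ (x, y) = w * (p (x, y) ^ (1 / (1 + ρ)) / D) := fun x => rfl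
    have hqlog : ∀ x : X, Real.log (xyTilted p ρ (x, y))
        = Real.log w + (1 / (1 + ρ) * Real.log (p (x, y)) - Real.log D) := by
      intro x
      have hpx : 0 < p (x, y) ^ (1 / (1 + ρ)) := Real.rpow_pos_of_pos (hpos _) _
      rw [hq x, Real.log_mul hw.ne' (div_pos hpx hD).ne', Real.log_div hpx.ne' hD.ne',
        Real.log_rpow (hpos _)]
    have step1 : (∑ x, xyTilted p ρ (x, y) * Real.log (xyTilted p ρ (x, y)))
        = (Real.log w - Real.log D) * (∑ x, xyTilted p ρ (x, y))
          + 1 / (1 + ρ) * ∑ x, xyTilted p ρ (x, y) * Real.log (p (x, y)) := by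
      rw [Finset.mul_sum, Finset.mul_sum, ← Finset.sum_add_distrib]
      refine Finset.sum_congr rfl fun x _ => ?_
      rw [hqlog x]; ring
    have hsum : (∑ x, xyTilted p ρ (x, y)) = w := by
      have := margY_tilted p hpos ρ y
      unfold margY at this
      rw [this]
    have hsum2 : (∑ x, xyTilted p ρ (x, y) * Real.log (p (x, y)))
        = w / D * ∑ x, p (x, y) ^ (1 / (1 + ρ)) * Real.log (p (x, y)) := by
      rw [Finset.mul_sum]
      refine Finset.sum_congr rfl fun x _ => ?_
      rw [hq x]; ring
    rw [step1, hsum, hsum2, margY_tilted p hpos ρ y, ← hwdef]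
    have hpow : D ^ (1 + ρ) = D ^ ρ * D := by
      rw [add_comm, Real.rpow_add hD, Real.rpow_one]
    rw [hwdef, hpow]
    field_simp
    ring
  unfold condEntXY entropy
  rw [Fintype.sum_prod_type, Finset.sum_comm]
  have : (∑ y : Y, ∑ x : X, xyTilted p ρ (x, y) * Real.log (xyTilted p ρ (x, y)))
      = (∑ y : Y, margY (xyTilted p ρ) y * Real.log (margY (xyTilted p ρ) y))
        - (∑ y, (Real.log (Dt p ρ y) * Dt p ρ y ^ (1 + ρ)
          - 1 / (1 + ρ) * Dt p ρ y ^ ρ * ∑ x, p (x, y) ^ (1 / (1 + ρ)) * Real.log (p (x, y))))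
          / Bt p ρ := by
    rw [Finset.sum_div, ← Finset.sum_sub_distrib]
    exact Finset.sum_congr rfl fun y _ => hinner y
  rw [this]
  ring

lemma hasDerivAt_logBt (hpos : ∀ z, 0 < p z) {ρ : ℝ} (hρ : -1 < ρ) :
    HasDerivAt (fun r => Real.log (Bt p r)) (condEntXY (xyTilted p ρ)) ρ := by
  have hs : (0:ℝ) < 1 + ρ := by linarith
  have hsne := ne_of_gt hs
  have h1' : HasDerivAt (fun r : ℝ => 1 + r) 1 ρ := (hasDerivAt_id ρ).const_add 1
  have hg : HasDerivAt (fun r : ℝ => 1 / (1 + r)) (-1 / (1 + ρ) ^ 2) ρ := by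
    simpa [one_div] using h1'.fun_inv hsne
  have hterm : ∀ z : X × Y, HasDerivAt (fun r => p z ^ (1 / (1 + r)))
      (-1 / (1 + ρ) ^ 2 * (p z ^ (1 / (1 + ρ)) * Real.log (p z))) ρ := by
    intro z
    have hc : HasDerivAt (fun _ : ℝ => p z) 0 ρ := hasDerivAt_const _ _
    have h := hc.rpow hg (hpos z)
    convert h using 1
    ring
  have hD : ∀ y : Y, HasDerivAt (fun r => Dt p r y)
      (-1 / (1 + ρ) ^ 2 * ∑ x, p (x, y) ^ (1 / (1 + ρ)) * Real.log (p (x, y))) ρ := by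
    intro y
    have h := HasDerivAt.fun_sum (u := Finset.univ) (fun x (_ : x ∈ Finset.univ) => hterm (x, y))
    rw [Finset.mul_sum]
    exact h
  have hDpow : ∀ y : Y, HasDerivAt (fun r => Dt p r y ^ (1 + r))
      ((-1 / (1 + ρ) ^ 2 * ∑ x, p (x, y) ^ (1 / (1 + ρ)) * Real.log (p (x, y))) * (1 + ρ)
          * Dt p ρ y ^ (1 + ρ - 1)
        + 1 * Dt p ρ y ^ (1 + ρ) * Real.log (Dt p ρ y)) ρ :=
    fun y => (hD y).rpow h1' (Dt_pos p hpos ρ y)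
  have hB : HasDerivAt (fun r => Bt p r)
      (∑ y, ((-1 / (1 + ρ) ^ 2 * ∑ x, p (x, y) ^ (1 / (1 + ρ)) * Real.log (p (x, y))) * (1 + ρ)
          * Dt p ρ y ^ (1 + ρ - 1)
        + 1 * Dt p ρ y ^ (1 + ρ) * Real.log (Dt p ρ y))) ρ :=
    HasDerivAt.fun_sum fun y _ => hDpow y
  have hlog := hB.log (Bt_pos p hpos ρ).ne'
  have : (∑ y, ((-1 / (1 + ρ) ^ 2 * ∑ x, p (x, y) ^ (1 / (1 + ρ)) * Real.log (p (x, y))) * (1 + ρ)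
          * Dt p ρ y ^ (1 + ρ - 1)
        + 1 * Dt p ρ y ^ (1 + ρ) * Real.log (Dt p ρ y))) / Bt p ρ
      = condEntXY (xyTilted p ρ) := by
    rw [condEnt_eq p hpos hρ]
    congr 1
    refine Finset.sum_congr rfl fun y _ => ?_
    rw [show (1:ℝ) + ρ - 1 = ρ by ring]
    field_simp
    ring
  rw [← this]
  exact hlog


lemma Bt_le (hpos : ∀ z, 0 < p z) {x y a b : ℝ} (hx : -1 < x) (hy : -1 < y)
    (ha : 0 < a) (hb : 0 < b) (hab : a + b = 1) :
    Bt p (a * x + b * y) ≤ Bt p x ^ a * Bt p y ^ b := by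
  set ρ : ℝ := a * x + b * y with hρdef
  have hs1 : (0:ℝ) < 1 + x := by linarith
  have hs2 : (0:ℝ) < 1 + y := by linarith
  have hs : (0:ℝ) < 1 + ρ := by nlinarith
  have hs1ne := ne_of_gt hs1
  have hs2ne := ne_of_gt hs2
  have hsne := ne_of_gt hs
  set c₁ : ℝ := a * (1 + x) / (1 + ρ) with hc₁def
  set c₂ : ℝ := b * (1 + y) / (1 + ρ) with hc₂def
  have hc₁ : 0 < c₁ := by positivity
  have hc₂ : 0 < c₂ := by positivity
  have hc : c₁ + c₂ = 1 := by
    rw [hc₁def, hc₂def, ← add_div, div_eq_one_iff_eq hsne, hρdef]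
    nlinarith
  have stepA : ∀ y0 : Y, Dt p ρ y0 ≤ Dt p x y0 ^ c₁ * Dt p y y0 ^ c₂ := by
    intro y0
    have h := my_holder2 (fun x0 => p (x0, y0) ^ (1 / (1 + x)))
      (fun x0 => p (x0, y0) ^ (1 / (1 + y)))
      (fun x0 => (Real.rpow_pos_of_pos (hpos _) _).le)
      (fun x0 => (Real.rpow_pos_of_pos (hpos _) _).le) hc₁ hc₂ hc
    refine le_trans (le_of_eq ?_) h
    unfold Dt
    refine Finset.sum_congr rfl fun x0 _ => ?_
    rw [← Real.rpow_mul (hpos _).le, ← Real.rpow_mul (hpos _).le,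
      ← Real.rpow_add (hpos _)]
    congr 1
    rw [hc₁def, hc₂def]
    field_simp
    linarith
  have stepB : ∀ y0 : Y, Dt p ρ y0 ^ (1 + ρ) ≤
      (Dt p x y0 ^ (1 + x)) ^ a * (Dt p y y0 ^ (1 + y)) ^ b := by
    intro y0
    calc Dt p ρ y0 ^ (1 + ρ)
        ≤ (Dt p x y0 ^ c₁ * Dt p y y0 ^ c₂) ^ (1 + ρ) :=
          Real.rpow_le_rpow (Dt_pos p hpos ρ y0).le (stepA y0) hs.le
      _ = (Dt p x y0 ^ (1 + x)) ^ a * (Dt p y y0 ^ (1 + y)) ^ b := by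
          rw [Real.mul_rpow (Real.rpow_nonneg (Dt_pos p hpos x y0).le _)
            (Real.rpow_nonneg (Dt_pos p hpos y y0).le _),
            ← Real.rpow_mul (Dt_pos p hpos x y0).le,
            ← Real.rpow_mul (Dt_pos p hpos y y0).le,
            ← Real.rpow_mul (Dt_pos p hpos x y0).le,
            ← Real.rpow_mul (Dt_pos p hpos y y0).le]
          congr 1
          · congr 1
            rw [hc₁def]; field_simp
          · congr 1
            rw [hc₂def]; field_simp
  calc Bt p ρ = ∑ y0, Dt p ρ y0 ^ (1 + ρ) := rfl
    _ ≤ ∑ y0, (Dt p x y0 ^ (1 + x)) ^ a * (Dt p y y0 ^ (1 + y)) ^ b :=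
        Finset.sum_le_sum fun y0 _ => stepB y0
    _ ≤ (∑ y0, Dt p x y0 ^ (1 + x)) ^ a * (∑ y0, Dt p y y0 ^ (1 + y)) ^ b :=
        my_holder2 _ _ (fun y0 => Real.rpow_nonneg (Dt_pos p hpos x y0).le _)
          (fun y0 => Real.rpow_nonneg (Dt_pos p hpos y y0).le _) ha hb hab
    _ = Bt p x ^ a * Bt p y ^ b := rfl

lemma logBt_convex (hpos : ∀ z, 0 < p z) :
    ConvexOn ℝ (Set.Ioi (-1 : ℝ)) (fun r => Real.log (Bt p r)) := by
  refine ⟨convex_Ioi _, ?_⟩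
  intro x hx y hy a b ha hb hab
  simp only [smul_eq_mul]
  rcases eq_or_lt_of_le ha with ha0 | ha'
  · have hb1 : b = 1 := by linarith
    rw [← ha0, hb1]; simp
  rcases eq_or_lt_of_le hb with hb0 | hb'
  · have ha1 : a = 1 := by linarith
    rw [← hb0, ha1]; simp
  have hx' : -1 < x := hx
  have hy' : -1 < y := hy
  calc Real.log (Bt p (a * x + b * y))
      ≤ Real.log (Bt p x ^ a * Bt p y ^ b) := by
        apply Real.log_le_log (Bt_pos p hpos _)
        exact Bt_le p hpos hx' hy' ha' hb' hab
    _ = a * Real.log (Bt p x) + b * Real.log (Bt p y) := by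
        rw [Real.log_mul (Real.rpow_pos_of_pos (Bt_pos p hpos x) _).ne'
          (Real.rpow_pos_of_pos (Bt_pos p hpos y) _).ne',
          Real.log_rpow (Bt_pos p hpos x), Real.log_rpow (Bt_pos p hpos y)]

end Aux17

/-- Lemma 17: the conditional entropy of the `x−y` tilted distribution is nondecreasing
in `ρ`. -/
theorem statement17 {X Y : Type*} [Fintype X] [Fintype Y] [Nonempty X] [Nonempty Y]
    (p : X × Y → ℝ) (hp : IsPMF p) (hpos : ∀ z, 0 < p z)
    (ρ₁ ρ₂ : ℝ) (h1 : -1 < ρ₁) (h12 : ρ₁ ≤ ρ₂) :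
    condEntXY (xyTilted p ρ₁) ≤ condEntXY (xyTilted p ρ₂) := by
  have h2 : -1 < ρ₂ := lt_of_lt_of_le h1 h12
  have conv := logBt_convex p hpos
  have key : ∀ r ∈ Set.Ioi (-1:ℝ), DifferentiableAt ℝ (fun r => Real.log (Bt p r)) r :=
    fun r hr => (hasDerivAt_logBt p hpos hr).differentiableAt
  have mono := conv.monotoneOn_deriv key
  have e1 := (hasDerivAt_logBt p hpos h1).deriv
  have e2 := (hasDerivAt_logBt p hpos h2).deriv
  have h := mono (Set.mem_Ioi.mpr h1) (Set.mem_Ioi.mpr h2) h12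
  rw [e1, e2] at h
  exact h
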